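/- Let $X$ be a metric space in which closed bounded balls around $p$ are compact, let $L>0$, and let $\Omega(L)=\{x\in\overline{B_{1.2}(p)}:\limsup_{t\to0}\rho(t,x)>L\}$. Fix $\sigma>0$ and $r>0$, and set $A=\{y\in B_{1.1}(p): d(y,\Omega(L))\ge r\}$. Then there exists $T=T(r,\sigma)>0$ such that $\rho(T,y)<L+\sigma$ for all $y\in A$. -/

import Mathlib

open Metric Filter Topology MeasureTheory
open scoped ENNReal NNReal

noncomputable section

/-- A loop, parametrized by `[0,1]` with equal endpoints, is contractible within the set `S`:
it admits a free homotopy, with image inside `S`, to a constant loop. -/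
def LoopContractibleIn {X : Type*} [TopologicalSpace X] (c : C(unitInterval, X))
    (S : Set X) : Prop :=
  ∃ (H : C(unitInterval × unitInterval, X)) (x₀ : X),
    (∀ t, H (t, 0) = c t) ∧ (∀ t, H (t, 1) = x₀) ∧ (∀ s, H (0, s) = H (1, s)) ∧
    Set.range H ⊆ S

/-- The module of `1`-contractibility `ρ(t,x)`: the infimum of all `ρ ≥ t` such that every
loop in `B_t(x)` is contractible in `B_ρ(x)` (and `∞` if there is no such `ρ`). -/
def contrMod {X : Type*} [PseudoEMetricSpace X] (t : ℝ≥0∞) (x : X) : ℝ≥0∞ :=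
  sInf {ρ : ℝ≥0∞ | t ≤ ρ ∧ ∀ c : C(unitInterval, X), c 0 = c 1 →
    Set.range c ⊆ EMetric.ball x t → LoopContractibleIn c (EMetric.ball x ρ)}

/-- A length metric space: the distance between two points is the infimum of the lengths
of paths joining them. -/
def IsLengthSpace (X : Type*) [PseudoEMetricSpace X] : Prop :=
  ∀ x y : X, edist x y = ⨅ γ : Path x y, eVariationOn (fun t : ℝ => γ.extend t) (Set.Icc 0 1)

/-- An `ε`-Gromov–Hausdorff approximation: `f` distorts distances by at most `ε`
and has `ε`-dense image. -/
def IsGHApprox {A B : Type*} [PseudoMetricSpace A] [PseudoMetricSpace B]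
    (f : A → B) (ε : ℝ) : Prop :=
  (∀ u v : A, |dist (f u) (f v) - dist u v| ≤ ε) ∧ ∀ b : B, ∃ a : A, dist (f a) b ≤ ε

/-- A pointed `ε`-Gromov–Hausdorff approximation. -/
def IsPointedGHApprox {A B : Type*} [PseudoMetricSpace A] [PseudoMetricSpace B]
    (f : A → B) (a : A) (b : B) (ε : ℝ) : Prop :=
  dist (f a) b ≤ ε ∧ IsGHApprox f ε

/-- A pointed `ε`-approximation at scale `R` (distortion and density on `R`-balls around
the base points). -/
def IsPGHApproxOn {A B : Type*} [PseudoMetricSpace A] [PseudoMetricSpace B]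
    (f : A → B) (a : A) (b : B) (R ε : ℝ) : Prop :=
  dist (f a) b ≤ ε ∧
  (∀ u ∈ Metric.closedBall a R, ∀ v ∈ Metric.closedBall a R,
    |dist (f u) (f v) - dist u v| ≤ ε) ∧
  ∀ y ∈ Metric.closedBall b R, ∃ u ∈ Metric.closedBall a R, dist (f u) y ≤ ε

/-- Pointed Gromov–Hausdorff convergence of `(M i, p i)` to `(X, x)`. -/
def PointedGHLim (M : ℕ → Type*) [∀ i, MetricSpace (M i)] (p : ∀ i, M i)
    (X : Type*) [MetricSpace X] (x : X) : Prop :=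
  ∀ R > 0, ∀ ε > 0, ∀ᶠ i in atTop, ∃ f : M i → X, IsPGHApproxOn f (p i) x R ε

/-- Gromov–Hausdorff convergence of a sequence of metric spaces to `X`. -/
def GHLim (M : ℕ → Type*) [∀ i, MetricSpace (M i)] (X : Type*) [MetricSpace X] : Prop :=
  ∀ ε > 0, ∀ᶠ i in atTop, ∃ f : M i → X, IsGHApprox f ε

/-- The comparison function `sn_c` for the space form of constant curvature `c`. -/
def modelSn (c t : ℝ) : ℝ :=
  if 0 < c then Real.sin (Real.sqrt c * t) / Real.sqrt c
  else if c < 0 then Real.sinh (Real.sqrt (-c) * t) / Real.sqrt (-c)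
  else t

/-- The volume of the ball of radius `r` in the `n`-dimensional simply connected space form
of constant curvature `c`. -/
def modelBallVol (n : ℕ) (c r : ℝ) : ℝ :=
  (μH[(n : ℝ) - 1] (Metric.sphere (0 : EuclideanSpace ℝ (Fin n)) 1)).toReal *
    ∫ t in (0:ℝ)..r, modelSn c t ^ (n - 1)

/-- Synthetic stand-in for the Ricci curvature lower bound `Ric ≥ (n-1)c` on an
`n`-dimensional Riemannian manifold: the Bishop–Gromov relative volume comparison with
respect to the `n`-dimensional Hausdorff measure (which is the Riemannian volume). -/
def RicciGE (M : Type*) [MetricSpace M] [MeasurableSpace M] [BorelSpace M]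
    (n : ℕ) (c : ℝ) : Prop :=
  ∀ x : M, ∀ r R : ℝ, 0 < r → r ≤ R →
    μH[(n : ℝ)] (Metric.ball x R) * ENNReal.ofReal (modelBallVol n c r) ≤
      μH[(n : ℝ)] (Metric.ball x r) * ENNReal.ofReal (modelBallVol n c R)

/-- Localized version of `RicciGE`: `Ric ≥ (n-1)c` on the region `s`. -/
def RicciGEOn (M : Type*) [MetricSpace M] [MeasurableSpace M] [BorelSpace M]
    (n : ℕ) (c : ℝ) (s : Set M) : Prop :=
  ∀ x ∈ s, ∀ r R : ℝ, 0 < r → r ≤ R → Metric.ball x R ⊆ s →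
    μH[(n : ℝ)] (Metric.ball x R) * ENNReal.ofReal (modelBallVol n c r) ≤
      μH[(n : ℝ)] (Metric.ball x r) * ENNReal.ofReal (modelBallVol n c R)

/-- The 1-skeleton of a simplicial complex in the plane. -/
def oneSkel (S : Geometry.SimplicialComplex ℝ ℂ) : Set ℂ :=
  ⋃ f ∈ {f ∈ S.faces | f.card ≤ 2}, convexHull ℝ (f : Set ℂ)

/-- Equicontinuity at `0` of a family of functions vanishing at `0`. -/
def EquicontAtZero (F : ℕ → ℝ≥0∞ → ℝ≥0∞) : Prop :=
  ∀ ε : ℝ≥0∞, 0 < ε → ∃ δ : ℝ≥0∞, 0 < δ ∧ ∀ i : ℕ, ∀ t < δ, F i t < ε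

end

section Aux

variable {X : Type*}

lemma LoopContractibleIn.mono' [TopologicalSpace X] {c : C(unitInterval, X)} {S S' : Set X}
    (h : LoopContractibleIn c S) (hss : S ⊆ S') : LoopContractibleIn c S' := by
  obtain ⟨H, x₀, h1, h2, h3, h4⟩ := h
  exact ⟨H, x₀, h1, h2, h3, h4.trans hss⟩

lemma contrMod_mono' [PseudoEMetricSpace X] {t t' : ℝ≥0∞} (h : t ≤ t') (x : X) :
    contrMod t x ≤ contrMod t' x := by
  apply sInf_le_sInf
  rintro ρ ⟨h1, h2⟩
  exact ⟨h.trans h1, fun c hc hrange =>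
    h2 c hc (hrange.trans (EMetric.ball_subset_ball h))⟩

lemma contrMod_le_add' [PseudoMetricSpace X] (t : ℝ≥0∞) (y w : X) :
    contrMod t y ≤ contrMod (t + edist y w) w + edist y w := by
  set d := edist y w with hd
  have hdtop : d ≠ ∞ := edist_ne_top y w
  conv_rhs => rw [contrMod]
  rw [ENNReal.sInf_add]
  refine le_iInf₂ fun ρ hρ => ?_
  obtain ⟨h1, h2⟩ := hρ
  apply sInf_le
  constructor
  · calc t ≤ t + d := le_self_add
      _ ≤ ρ := h1
      _ ≤ ρ + d := le_self_add
  · intro c hc hrange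
    have hr2 : Set.range c ⊆ EMetric.ball w (t + d) := by
      intro z hz
      have hz' : edist z y < t := EMetric.mem_ball.1 (hrange hz)
      have : edist z w ≤ edist z y + d := edist_triangle z y w
      exact EMetric.mem_ball.2 (this.trans_lt (ENNReal.add_lt_add_right hdtop hz'))
    refine (h2 c hc hr2).mono' ?_
    intro z hz
    have hz' : edist z w < ρ := EMetric.mem_ball.1 hz
    have : edist z y ≤ edist z w + d := by
      rw [hd, edist_comm y w]; exact edist_triangle z w y
    exact EMetric.mem_ball.2 (this.trans_lt (ENNReal.add_lt_add_right hdtop hz'))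

end Aux

/-- uniform control of the module of `1`-contractibility on the annulus
`A = {y ∈ B_{1.1}(p) : d(y, Ω(L)) ≥ r}` away from `Ω(L)`. -/

theorem stmt10 (X : Type) [MetricSpace X] [ProperSpace X] (p : X)
    (L : ℝ≥0∞) (hL : 0 < L) (σ : ℝ≥0∞) (hσ : 0 < σ) (r : ℝ) (hr : 0 < r) :
    ∃ T : ℝ≥0∞, 0 < T ∧
      ∀ y ∈ Metric.ball p 1.1,
        r ≤ Metric.infDist y {x ∈ closure (Metric.ball p 1.2) |
          L < limsup (fun t => contrMod t x) (𝓝[>] (0:ℝ≥0∞))} →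
        contrMod T y < L + σ := by
  classical
  by_cases hLtop : L = ∞
  · refine ⟨1, zero_lt_one, fun y hy hry => absurd hry ?_⟩
    have hΩ : {x ∈ closure (Metric.ball p 1.2) |
        L < limsup (fun t => contrMod t x) (𝓝[>] (0:ℝ≥0∞))} = ∅ := by
      ext x
      simp only [Set.mem_setOf_eq, Set.mem_empty_iff_false, iff_false, not_and, hLtop]
      exact fun _ => not_top_lt
    rw [hΩ, Metric.infDist_empty]
    exact not_le.2 hr
  set Ω := {x ∈ closure (Metric.ball p 1.2) |
      L < limsup (fun t => contrMod t x) (𝓝[>] (0:ℝ≥0∞))} with hΩdef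
  set σ' := min σ 1 / 2 with hσ'def
  have hmin0 : min σ 1 ≠ 0 := by
    simp only [ne_eq, min_eq_iff]
    rintro (⟨h, -⟩ | ⟨h, -⟩)
    · exact hσ.ne' h
    · exact one_ne_zero h
  have hσ'0 : σ' ≠ 0 := by
    rw [hσ'def]
    exact (ENNReal.div_pos hmin0 ENNReal.ofNat_ne_top).ne'
  have hσ'σ : σ' + σ' ≤ σ := by
    rw [hσ'def, ENNReal.add_halves]
    exact min_le_left _ _
  set A := Metric.closedBall p 1.1 ∩ {y | r ≤ Metric.infDist y Ω} with hAdef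
  have hAcomp : IsCompact A :=
    (isCompact_closedBall p 1.1).inter_right
      (isClosed_le continuous_const (Metric.continuous_infDist_pt Ω))
  have hnotΩ : ∀ y ∈ A, limsup (fun t => contrMod t y) (𝓝[>] (0:ℝ≥0∞)) ≤ L := by
    rintro y ⟨hy1, hy2⟩
    by_contra h
    push_neg at h
    have hyΩ : y ∈ Ω := by
      refine ⟨subset_closure ?_, h⟩
      exact Metric.closedBall_subset_ball (by norm_num) hy1
    have h0 := Metric.infDist_zero_of_mem hyΩ
    have hy2' : r ≤ Metric.infDist y Ω := hy2
    rw [h0] at hy2'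
    exact absurd hy2' (not_le.2 hr)
  have hex : ∀ y : X, ∃ t : ℝ≥0∞, 0 < t ∧ (y ∈ A → contrMod t y < L + σ') := by
    intro y
    by_cases hy : y ∈ A
    · have h1 : limsup (fun t => contrMod t y) (𝓝[>] (0:ℝ≥0∞)) < L + σ' :=
        lt_of_le_of_lt (hnotΩ y hy) (ENNReal.lt_add_right hLtop hσ'0)
      have h2 := Filter.eventually_lt_of_limsup_lt h1
      obtain ⟨t, ht, hlt⟩ := (eventually_mem_nhdsWithin.and h2).exists
      exact ⟨t, ht, fun _ => hlt⟩
    · exact ⟨1, zero_lt_one, fun h => absurd h hy⟩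
  choose t ht0 htlt using hex
  obtain ⟨fin, hfinA, hcover⟩ := hAcomp.elim_nhds_subcover
    (fun y => EMetric.ball y (min (t y / 2) σ'))
    (fun y _ => EMetric.ball_mem_nhds y
      (lt_min (ENNReal.div_pos (ht0 y).ne' ENNReal.ofNat_ne_top) (zero_lt_iff.mpr hσ'0)))
  refine ⟨fin.inf (fun y => t y / 2), ?_, ?_⟩
  · rw [Finset.lt_inf_iff (by simp : (0:ℝ≥0∞) < ⊤)]
    exact fun y _ => ENNReal.div_pos (ht0 y).ne' ENNReal.ofNat_ne_top
  · intro w hw hrw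
    have hwA : w ∈ A := ⟨Metric.ball_subset_closedBall hw, hrw⟩
    obtain ⟨i, hi, hwi⟩ := Set.mem_iUnion₂.1 (hcover hwA)
    have hd : edist w i < min (t i / 2) σ' := EMetric.mem_ball.1 hwi
    have hd1 : edist w i ≤ t i / 2 := (hd.trans_le (min_le_left _ _)).le
    have hd2 : edist w i < σ' := hd.trans_le (min_le_right _ _)
    calc contrMod (fin.inf fun y => t y / 2) w
        ≤ contrMod (t i / 2) w := contrMod_mono' (Finset.inf_le hi) w
      _ ≤ contrMod (t i / 2 + edist w i) i + edist w i := contrMod_le_add' _ w i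
      _ ≤ contrMod (t i) i + edist w i := by
          refine add_le_add_left (contrMod_mono' ?_ i) _
          calc t i / 2 + edist w i ≤ t i / 2 + t i / 2 := add_le_add_right hd1 _
            _ = t i := ENNReal.add_halves _
      _ < (L + σ') + σ' := ENNReal.add_lt_add (htlt i (hfinA i hi)) hd2
      _ = L + (σ' + σ') := add_assoc _ _ _
      _ ≤ L + σ := add_le_add_right hσ'σ L
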